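/- For every positive integer m, the maximum asymptotic density δ_∞(2m) of zero-error codes for 2m-event signals under unbounded time dilation equals (−1)^{m+1} · 2 · (2m)! / ((2π)^{2m} · B_{2m}), where B_{2m} is the (2m)-th Bernoulli number; that is, lim_{N→∞} |C(N,2m)| / binomial(N,2m) = (−1)^{m+1} · 2 · (2m)! / ((2π)^{2m} · B_{2m}). -/

import Mathlib

open Filter

/-- The space of `k`-event signals: `k` inter-event intervals, each at least 1,
summing to at most `N`. -/
def SignalSpace (N k : ℕ) : Finset (Fin k → ℕ) :=
  (Fintype.piFinset fun _ => Finset.Icc 1 N).filter fun t => ∑ i, t i ≤ N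

/-- The signals in `SignalSpace N k` whose coordinates are coprime (gcd 1). -/
def CoprimeCode (N k : ℕ) : Finset (Fin k → ℕ) :=
  (SignalSpace N k).filter fun t => Finset.univ.gcd t = 1

section Aux

open Topology ArithmeticFunction Complex

lemma div_div_div_same (a b c : ℝ) (hc : c ≠ 0) : (a/c)/(b/c) = a/b := by
  rcases eq_or_ne b 0 with rfl | hb
  · simp
  · field_simp

lemma choose_ratio_cast (M N k : ℕ) :
    ((M.choose k : ℝ)) / (N.choose k : ℝ)
      = (M.descFactorial k : ℝ) / (N.descFactorial k : ℝ) := by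
  have hc : ((k.factorial : ℝ)) ≠ 0 := by positivity
  rw [Nat.choose_eq_descFactorial_div_factorial M, Nat.choose_eq_descFactorial_div_factorial N,
    Nat.cast_div (Nat.factorial_dvd_descFactorial _ _) hc,
    Nat.cast_div (Nat.factorial_dvd_descFactorial _ _) hc,
    div_div_div_same _ _ _ hc]

lemma tendsto_choose_ratio (k d : ℕ) (hk : 1 ≤ k) (hd : 1 ≤ d) :
    Tendsto (fun N : ℕ => ((N / d).choose k : ℝ) / (N.choose k : ℝ)) atTop
      (𝓝 (((d:ℝ) ^ k)⁻¹)) := by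
  have hd0 : (0:ℝ) < d := by exact_mod_cast hd
  rw [← inv_pow]
  -- lower bound function
  have hL : Tendsto (fun N : ℕ => ((N:ℝ)/d - k)^k / (N:ℝ)^k) atTop (𝓝 (((d:ℝ)⁻¹)^k)) := by
    have h1 : Tendsto (fun N : ℕ => (d:ℝ)⁻¹ - k/(N:ℝ)) atTop (𝓝 ((d:ℝ)⁻¹)) := by
      have := tendsto_const_div_atTop_nhds_zero_nat (k:ℝ)
      simpa using tendsto_const_nhds.sub this
    have h2 := h1.pow k
    refine h2.congr' ?_
    filter_upwards [eventually_ge_atTop 1] with N hN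
    have hN0 : ((N:ℝ)) ≠ 0 := by positivity
    have hbase : (d:ℝ)⁻¹ - (k:ℝ)/(N:ℝ) = ((N:ℝ)/d - k)/(N:ℝ) := by
      field_simp
      try ring
    rw [← div_pow, ← hbase]
  -- upper bound function
  have hU : Tendsto (fun N : ℕ => ((N:ℝ)/d)^k / ((N:ℝ) - k)^k) atTop (𝓝 (((d:ℝ)⁻¹)^k)) := by
    have h1 : Tendsto (fun N : ℕ => (d:ℝ)⁻¹ * (1 - k/(N:ℝ))⁻¹) atTop (𝓝 ((d:ℝ)⁻¹)) := by
      have h0 := tendsto_const_div_atTop_nhds_zero_nat (k:ℝ)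
      have hone : Tendsto (fun N : ℕ => 1 - (k:ℝ)/(N:ℝ)) atTop (𝓝 1) := by
        simpa using tendsto_const_nhds.sub h0
      have : Tendsto (fun N : ℕ => (1 - (k:ℝ)/(N:ℝ))⁻¹) atTop (𝓝 1) := by
        simpa using hone.inv₀ one_ne_zero
      simpa using tendsto_const_nhds.mul this
    have h2 := h1.pow k
    refine h2.congr' ?_
    filter_upwards [eventually_ge_atTop (k+1)] with N hN
    have hNk : (k:ℝ) + 1 ≤ (N:ℝ) := by exact_mod_cast hN
    have hN0 : (0:ℝ) < (N:ℝ) := by linarith [hNk]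
    have e1 : ((N:ℝ)) - k ≠ 0 := by intro h; nlinarith
    have e2 : (1:ℝ) - (k:ℝ)/(N:ℝ) ≠ 0 := by
      have : (0:ℝ) < 1 - (k:ℝ)/(N:ℝ) := by
        rw [sub_pos, div_lt_one hN0]; linarith
      linarith
    have hbase : (d:ℝ)⁻¹ * (1 - (k:ℝ)/(N:ℝ))⁻¹ = ((N:ℝ)/d)/((N:ℝ) - k) := by
      field_simp
      try ring
    rw [← div_pow, ← hbase]
  refine tendsto_of_tendsto_of_tendsto_of_le_of_le' hL hU ?_ ?_
  · -- lower ≤ ratio eventually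
    filter_upwards [eventually_ge_atTop (d*(k+1))] with N hN
    set M := N / d with hM
    have hMk : k + 1 ≤ M := by
      rw [hM, Nat.le_div_iff_mul_le (by omega)]; nlinarith [hN]
    have hNk : k + 1 ≤ N := le_trans hMk (Nat.div_le_self N d)
    rw [choose_ratio_cast]
    have hden_pos : (0:ℝ) < (N.descFactorial k : ℝ) := by
      have : N.descFactorial k ≠ 0 := by
        rw [Ne, Nat.descFactorial_eq_zero_iff_lt]; omega
      exact_mod_cast Nat.pos_of_ne_zero this
    have hb2 : (N.descFactorial k : ℝ) ≤ (N:ℝ)^k := by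
      exact_mod_cast Nat.descFactorial_le_pow N k
    have hnum_nonneg : (0:ℝ) ≤ (M.descFactorial k : ℝ) := by positivity
    have ha1 : ((N:ℝ)/d - k)^k ≤ (M.descFactorial k : ℝ) := by
      have hcast : ((M:ℝ)) ≤ (N:ℝ)/d := by
        rw [le_div_iff₀ hd0]; exact_mod_cast Nat.div_mul_le_self N d
      have hbase_nonneg : (0:ℝ) ≤ (N:ℝ)/d - k := by
        have : (k:ℝ) + 1 ≤ (M:ℝ) := by exact_mod_cast hMk
        linarith
      have hlt : (N:ℝ)/d < (M:ℝ) + 1 := by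
        rw [div_lt_iff₀ hd0]
        have h1 : N < d * (M + 1) := by
          have h2 := Nat.div_add_mod N d
          have h3 := Nat.mod_lt N (show 0 < d by omega)
          calc N = d * M + N % d := h2.symm
            _ < d * M + d := by omega
            _ = d * (M + 1) := by ring
        calc (N:ℝ) < ((d * (M+1) : ℕ) : ℝ) := by exact_mod_cast h1
          _ = ((M:ℝ)+1) * d := by push_cast; ring
      have hle : (N:ℝ)/d - k ≤ ((M + 1 - k : ℕ) : ℝ) := by
        have : ((M + 1 - k : ℕ) : ℝ) = (M:ℝ) + 1 - k := by
          have : k ≤ M + 1 := by omega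
          push_cast [this]; ring
        rw [this]; linarith
      calc ((N:ℝ)/d - k)^k ≤ (((M + 1 - k : ℕ) : ℝ))^k :=
            pow_le_pow_left₀ hbase_nonneg hle k
        _ = (((M + 1 - k)^k : ℕ) : ℝ) := by push_cast; ring
        _ ≤ (M.descFactorial k : ℝ) := by exact_mod_cast Nat.pow_sub_le_descFactorial M k
    exact div_le_div₀ hnum_nonneg ha1 hden_pos hb2
  · -- ratio ≤ upper eventually
    filter_upwards [eventually_ge_atTop (d*(k+1))] with N hN
    set M := N / d with hM
    have hMk : k + 1 ≤ M := by
      rw [hM, Nat.le_div_iff_mul_le (by omega)]; nlinarith [hN]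
    have hNk : k + 1 ≤ N := le_trans hMk (Nat.div_le_self N d)
    rw [choose_ratio_cast]
    have hNkR : (k:ℝ) + 1 ≤ (N:ℝ) := by exact_mod_cast hNk
    have hb1_pos : (0:ℝ) < ((N:ℝ) - k)^k := by
      apply pow_pos; linarith
    have ha2 : (M.descFactorial k : ℝ) ≤ ((N:ℝ)/d)^k := by
      have h1 : (M.descFactorial k : ℝ) ≤ (M:ℝ)^k := by
        exact_mod_cast Nat.descFactorial_le_pow M k
      have hcast : ((M:ℝ)) ≤ (N:ℝ)/d := by
        rw [le_div_iff₀ hd0]; exact_mod_cast Nat.div_mul_le_self N d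
      exact le_trans h1 (pow_le_pow_left₀ (by positivity) hcast k)
    have hb1 : ((N:ℝ) - k)^k ≤ (N.descFactorial k : ℝ) := by
      have hle : (N:ℝ) - k ≤ ((N + 1 - k : ℕ) : ℝ) := by
        have : ((N + 1 - k : ℕ) : ℝ) = (N:ℝ) + 1 - k := by
          have : k ≤ N + 1 := by omega
          push_cast [this]; ring
        rw [this]; linarith
      calc ((N:ℝ) - k)^k ≤ (((N + 1 - k : ℕ) : ℝ))^k :=
            pow_le_pow_left₀ (by linarith) hle k
        _ = (((N + 1 - k)^k : ℕ) : ℝ) := by push_cast; ring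
        _ ≤ (N.descFactorial k : ℝ) := by exact_mod_cast Nat.pow_sub_le_descFactorial N k
    exact div_le_div₀ (by positivity) ha2 hb1_pos hb1

lemma signalSpace_fiber_card (N k j : ℕ) (hj1 : 1 ≤ j) (hjN : j ≤ N) :
    ((SignalSpace N (k+1)).filter fun t => t (Fin.last k) = j).card
      = (SignalSpace (N-j) k).card := by
  refine Finset.card_nbij' (fun t => Fin.init t) (fun s => Fin.snoc s j) ?_ ?_ ?_ ?_
  · intro t ht
    simp only [Finset.mem_coe, Finset.mem_filter, SignalSpace, Fintype.mem_piFinset, Finset.mem_Icc] at ht ⊢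
    obtain ⟨⟨h1, h2⟩, h3⟩ := ht
    have hsum : ∑ i : Fin (k+1), t i = ∑ i : Fin k, t i.castSucc + t (Fin.last k) :=
      Fin.sum_univ_castSucc t
    have hsum' : ∑ i : Fin k, Fin.init t i ≤ N - j := by
      have : ∑ i : Fin k, Fin.init t i = ∑ i : Fin k, t i.castSucc := rfl
      rw [this]; omega
    refine ⟨fun i => ?_, hsum'⟩
    have hle : Fin.init t i ≤ ∑ i' : Fin k, Fin.init t i' :=
      Finset.single_le_sum (fun _ _ => Nat.zero_le _) (Finset.mem_univ i)
    exact ⟨(h1 i.castSucc).1, le_trans hle hsum'⟩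
  · intro s hs
    simp only [Finset.mem_coe, Finset.mem_filter, SignalSpace, Fintype.mem_piFinset, Finset.mem_Icc] at hs ⊢
    obtain ⟨h1, h2⟩ := hs
    refine ⟨⟨fun i => ?_, ?_⟩, Fin.snoc_last _ _⟩
    · refine Fin.lastCases ?_ (fun i => ?_) i
      · rw [Fin.snoc_last]; exact ⟨hj1, hjN⟩
      · rw [Fin.snoc_castSucc]; exact ⟨(h1 i).1, le_trans (h1 i).2 (Nat.sub_le _ _)⟩
    · rw [Fin.sum_univ_castSucc]
      simp only [Fin.snoc_castSucc, Fin.snoc_last]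
      omega
  · intro t ht
    simp only [Finset.mem_coe, Finset.mem_filter] at ht
    rw [← ht.2]; exact Fin.snoc_init_self t
  · intro s _; simp

lemma card_signalSpace (k : ℕ) : ∀ N, (SignalSpace N k).card = N.choose k := by
  induction k with
  | zero =>
    intro N
    rw [SignalSpace, Finset.filter_true_of_mem (by simp), Nat.choose_zero_right]
    simp
  | succ k ih =>
    intro N
    have h1 : ∀ t ∈ SignalSpace N (k+1), t (Fin.last k) ∈ Finset.Icc 1 N := by
      intro t ht
      simp only [SignalSpace, Finset.mem_filter, Fintype.mem_piFinset] at ht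
      exact ht.1 _
    rw [Finset.card_eq_sum_card_fiberwise h1]
    have h2 : ∀ j ∈ Finset.Icc 1 N,
        ((SignalSpace N (k+1)).filter fun t => t (Fin.last k) = j).card
          = (N - j).choose k := by
      intro j hj
      simp only [Finset.mem_Icc] at hj
      rw [signalSpace_fiber_card N k j hj.1 hj.2, ih]
    rw [Finset.sum_congr rfl h2]
    have h3 : ∑ j ∈ Finset.Icc 1 N, (N - j).choose k
        = ∑ i ∈ Finset.range N, i.choose k := by
      refine Finset.sum_nbij' (fun j => N - j) (fun i => N - i) ?_ ?_ ?_ ?_ ?_ <;>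
        simp only [Finset.mem_Icc, Finset.mem_range] <;> intros
      · omega
      · omega
      · omega
      · omega
      · trivial
    rw [h3]
    rcases Nat.eq_zero_or_pos N with rfl | hN
    · simp
    · have : Finset.range N = Finset.range ((N - 1) + 1) := by congr 1; omega
      rw [this, Finset.range_eq_Ico, Finset.Ico_add_one_right_eq_Icc]
      rw [← Finset.sum_filter_add_sum_filter_not _ (fun i => k ≤ i)]
      have hz : ∑ i ∈ (Finset.Icc 0 (N-1)).filter (fun i => ¬ k ≤ i), i.choose k = 0 := by
        apply Finset.sum_eq_zero
        intro i hi
        simp only [Finset.mem_filter, not_le] at hi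
        exact Nat.choose_eq_zero_of_lt hi.2
      have hf : (Finset.Icc 0 (N-1)).filter (fun i => k ≤ i) = Finset.Icc k (N-1) := by
        ext i; simp only [Finset.mem_filter, Finset.mem_Icc]; omega
      have hN' : N - 1 + 1 = N := by omega
      rw [hz, hf, Nat.sum_Icc_choose, hN', add_zero]

lemma card_dvd_filter (N k d : ℕ) (hd : 1 ≤ d) :
    ((SignalSpace N k).filter fun t => d ∣ Finset.univ.gcd t).card
      = (N / d).choose k := by
  rw [← card_signalSpace]
  refine Finset.card_nbij' (fun t i => t i / d) (fun s i => d * s i) ?_ ?_ ?_ ?_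
  · intro t ht
    simp only [Finset.mem_coe, Finset.mem_filter, SignalSpace, Fintype.mem_piFinset, Finset.mem_Icc,
      Finset.dvd_gcd_iff] at ht ⊢
    obtain ⟨⟨h1, h2⟩, h3⟩ := ht
    have hdvd : ∀ i, d ∣ t i := fun i => h3 i (Finset.mem_univ i)
    constructor
    · intro i
      exact ⟨(Nat.one_le_div_iff hd).2 (Nat.le_of_dvd (h1 i).1 (hdvd i)),
        Nat.div_le_div_right (h1 i).2⟩
    · rw [Nat.le_div_iff_mul_le hd, Finset.sum_mul]
      calc ∑ i, t i / d * d = ∑ i, t i := by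
            exact Finset.sum_congr rfl fun i _ => Nat.div_mul_cancel (hdvd i)
        _ ≤ N := h2
  · intro s hs
    simp only [Finset.mem_coe, Finset.mem_filter, SignalSpace, Fintype.mem_piFinset, Finset.mem_Icc,
      Finset.dvd_gcd_iff] at hs ⊢
    obtain ⟨h1, h2⟩ := hs
    refine ⟨⟨fun i => ⟨le_trans hd (Nat.le_mul_of_pos_right d ((h1 i).1)), ?_⟩, ?_⟩,
      fun i _ => Dvd.intro _ rfl⟩
    · calc d * s i ≤ d * (N / d) := Nat.mul_le_mul_left d (h1 i).2
        _ ≤ N := Nat.mul_div_le N d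
    · rw [← Finset.mul_sum]
      calc d * ∑ i, s i ≤ d * (N / d) := Nat.mul_le_mul_left d h2
        _ ≤ N := Nat.mul_div_le N d
  · intro t ht
    simp only [Finset.mem_coe, Finset.mem_filter, Finset.dvd_gcd_iff] at ht
    funext i
    exact Nat.mul_div_cancel' (ht.2 i (Finset.mem_univ i))
  · intro s _
    funext i
    exact Nat.mul_div_cancel_left _ hd

lemma sum_divisors_moebius (n : ℕ) :
    ∑ d ∈ n.divisors, moebius d = if n = 1 then 1 else 0 := by
  rw [← coe_mul_zeta_apply, moebius_mul_coe_zeta, one_apply]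

lemma gcd_facts {N k : ℕ} (hk : 1 ≤ k) {t : Fin k → ℕ} (ht : t ∈ SignalSpace N k) :
    Finset.univ.gcd t ≠ 0 ∧ Finset.univ.gcd t ≤ N := by
  simp only [SignalSpace, Finset.mem_filter, Fintype.mem_piFinset, Finset.mem_Icc] at ht
  have i0 : Fin k := ⟨0, hk⟩
  have h1 : 1 ≤ t i0 := (ht.1 i0).1
  have h2 : Finset.univ.gcd t ∣ t i0 := Finset.gcd_dvd (Finset.mem_univ i0)
  constructor
  · intro h0
    rw [h0] at h2
    omega
  · exact le_trans (Nat.le_of_dvd (by omega) h2) (ht.1 i0).2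

lemma coprime_count (N k : ℕ) (hk : 1 ≤ k) :
    ((CoprimeCode N k).card : ℤ)
      = ∑ d ∈ Finset.Icc 1 N, moebius d * ((N / d).choose k : ℤ) := by
  have step1 : ((CoprimeCode N k).card : ℤ)
      = ∑ t ∈ SignalSpace N k, ∑ d ∈ (Finset.univ.gcd t).divisors, moebius d := by
    rw [CoprimeCode, Finset.card_filter]
    push_cast
    refine Finset.sum_congr rfl fun t ht => ?_
    rw [sum_divisors_moebius]
  rw [step1]
  have step2 : ∑ t ∈ SignalSpace N k, ∑ d ∈ (Finset.univ.gcd t).divisors, moebius d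
      = ∑ d ∈ Finset.Icc 1 N,
          ∑ _t ∈ (SignalSpace N k).filter (fun t => d ∣ Finset.univ.gcd t), moebius d := by
    rw [Finset.sum_sigma', Finset.sum_sigma']
    refine Finset.sum_nbij' (fun x => ⟨x.2, x.1⟩) (fun x => ⟨x.2, x.1⟩) ?_ ?_ ?_ ?_ ?_
    · rintro ⟨t, d⟩ hx
      simp only [Finset.mem_sigma, Nat.mem_divisors, Finset.mem_filter, Finset.mem_Icc] at hx ⊢
      obtain ⟨ht, hdvd, hne⟩ := hx
      obtain ⟨hne', hle⟩ := gcd_facts hk ht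
      exact ⟨⟨Nat.one_le_iff_ne_zero.2 (by rintro rfl; exact hne (Nat.eq_zero_of_zero_dvd hdvd ▸ rfl)),
        le_trans (Nat.le_of_dvd (Nat.pos_of_ne_zero hne') hdvd) hle⟩, ht, hdvd⟩
    · rintro ⟨d, t⟩ hx
      simp only [Finset.mem_sigma, Nat.mem_divisors, Finset.mem_filter, Finset.mem_Icc] at hx ⊢
      obtain ⟨hd, ht, hdvd⟩ := hx
      exact ⟨ht, hdvd, (gcd_facts hk ht).1⟩
    · rintro ⟨t, d⟩ _; rfl
    · rintro ⟨d, t⟩ _; rfl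
    · rintro ⟨t, d⟩ _; rfl
  rw [step2]
  refine Finset.sum_congr rfl fun d hd => ?_
  simp only [Finset.mem_Icc] at hd
  rw [Finset.sum_const, card_dvd_filter N k d hd.1]
  simp [mul_comm]

lemma tendsto_density (k : ℕ) (hk : 2 ≤ k) :
    Tendsto (fun N : ℕ => ((CoprimeCode N k).card : ℝ) / (N.choose k : ℝ)) atTop
      (𝓝 (∑' d : ℕ, (moebius d : ℝ) * ((d:ℝ)^k)⁻¹)) := by
  have hk1 : 1 ≤ k := by omega
  set f : ℕ → ℕ → ℝ :=
    fun N d => (moebius d : ℝ) * (((N/d).choose k : ℝ) / (N.choose k : ℝ)) with hf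
  set g : ℕ → ℝ := fun d => (moebius d : ℝ) * ((d:ℝ)^k)⁻¹ with hg
  have key : Tendsto (fun N => ∑' d, f N d) atTop (𝓝 (∑' d, g d)) := by
    apply tendsto_tsum_of_dominated_convergence
      (bound := fun d : ℕ => 2^k * ((d:ℝ)^k)⁻¹)
    · exact (Real.summable_nat_pow_inv.2 hk).mul_left _
    · intro d
      rcases Nat.eq_zero_or_pos d with rfl | hd
      · simp [hf, hg]
      · exact (tendsto_choose_ratio k d hk1 hd).const_mul _
    · filter_upwards [eventually_ge_atTop (2*k+1)] with N hN
      intro d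
      have hbnd_nonneg : ∀ d : ℕ, (0:ℝ) ≤ 2^k * ((d:ℝ)^k)⁻¹ := by intro d; positivity
      rcases Nat.eq_zero_or_pos d with rfl | hd
      · simp [hf]
      · have hratio_nonneg : (0:ℝ) ≤ ((N/d).choose k : ℝ) / (N.choose k : ℝ) := by positivity
        have habs : |f N d| ≤ ((N/d).choose k : ℝ) / (N.choose k : ℝ) := by
          rw [hf, abs_mul, _root_.abs_of_nonneg hratio_nonneg]
          have : |(moebius d : ℝ)| ≤ 1 := by
            have := abs_moebius_le_one (n := d)
            exact_mod_cast (by exact_mod_cast this : ((|moebius d| : ℤ) : ℝ) ≤ 1)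
          nlinarith [hratio_nonneg]
        refine le_trans habs ?_
        set M := N / d with hM
        rcases lt_or_ge M k with hMk | hMk
        · rw [Nat.choose_eq_zero_of_lt hMk]
          simpa using hbnd_nonneg d
        · -- k ≤ M
          rw [choose_ratio_cast]
          have hd0 : (0:ℝ) < (d:ℝ) := by exact_mod_cast hd
          have hN0 : (0:ℝ) < (N:ℝ) := by
            have : 1 ≤ N := by omega
            exact_mod_cast this
          have hNk : 2*(k:ℝ) + 1 ≤ (N:ℝ) := by exact_mod_cast hN
          have ha2 : ((M.descFactorial k : ℝ)) ≤ ((N:ℝ)/d)^k := by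
            have h1 : (M.descFactorial k : ℝ) ≤ (M:ℝ)^k := by
              exact_mod_cast Nat.descFactorial_le_pow M k
            have hcast : ((M:ℝ)) ≤ (N:ℝ)/d := by
              rw [le_div_iff₀ hd0]; exact_mod_cast Nat.div_mul_le_self N d
            exact le_trans h1 (pow_le_pow_left₀ (by positivity) hcast k)
          have hb1_pos : (0:ℝ) < ((N:ℝ)/2)^k := by positivity
          have hb1 : ((N:ℝ)/2)^k ≤ (N.descFactorial k : ℝ) := by
            have hle : (N:ℝ)/2 ≤ ((N + 1 - k : ℕ) : ℝ) := by
              have hc : ((N + 1 - k : ℕ) : ℝ) = (N:ℝ) + 1 - k := by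
                have : k ≤ N + 1 := by omega
                push_cast [this]; ring
              rw [hc]; linarith
            calc ((N:ℝ)/2)^k ≤ (((N + 1 - k : ℕ) : ℝ))^k :=
                  pow_le_pow_left₀ (by positivity) hle k
              _ = (((N + 1 - k)^k : ℕ) : ℝ) := by push_cast; ring
              _ ≤ (N.descFactorial k : ℝ) := by
                  exact_mod_cast Nat.pow_sub_le_descFactorial N k
          refine le_trans (div_le_div₀ (by positivity) ha2 hb1_pos hb1) ?_
          have : ((N:ℝ)/d)^k / ((N:ℝ)/2)^k = ((2:ℝ)/d)^k := by
            rw [← div_pow]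
            congr 1
            field_simp
          rw [this, div_pow, div_eq_mul_inv]
  refine key.congr' ?_
  filter_upwards [eventually_ge_atTop k] with N hN
  have hchoose_pos : (0:ℝ) < (N.choose k : ℝ) := by
    exact_mod_cast Nat.choose_pos hN
  have hzero : ∀ d ∉ Finset.Icc 1 N, f N d = 0 := by
    intro d hd
    simp only [Finset.mem_Icc, not_and, not_le] at hd
    rcases Nat.eq_zero_or_pos d with rfl | hd1
    · simp [hf]
    · have hdN : N < d := hd hd1
      have : N / d = 0 := Nat.div_eq_of_lt hdN
      rw [hf]
      simp only [this]
      rw [Nat.choose_eq_zero_of_lt (by omega : 0 < k)]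
      simp
  rw [tsum_eq_sum hzero]
  have hcast : ((CoprimeCode N k).card : ℝ)
      = ∑ d ∈ Finset.Icc 1 N, (moebius d : ℝ) * ((N / d).choose k : ℝ) := by
    have := coprime_count N k hk1
    have h2 : (((CoprimeCode N k).card : ℤ) : ℝ)
        = ((∑ d ∈ Finset.Icc 1 N, moebius d * ((N / d).choose k : ℤ) : ℤ) : ℝ) := by
      exact_mod_cast congrArg (fun z : ℤ => (z : ℝ)) this
    push_cast at h2 ⊢
    exact h2
  rw [hcast, Finset.sum_div]
  refine Finset.sum_congr rfl fun d _ => ?_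
  rw [hf, mul_div_assoc]

lemma tsum_moebius_value (m : ℕ) (hm : 1 ≤ m) :
    ∑' d : ℕ, (moebius d : ℝ) * ((d:ℝ)^(2*m))⁻¹
      = (-1 : ℝ) ^ (m + 1) * 2 * (Nat.factorial (2 * m) : ℝ) /
        ((2 * Real.pi) ^ (2 * m) * (bernoulli (2 * m) : ℝ)) := by
  set k := 2 * m with hk
  have hk2 : 2 ≤ k := by omega
  set s : ℂ := ((k : ℕ) : ℂ) with hs_def
  have hs : 1 < s.re := by
    rw [hs_def]
    simp only [natCast_re]
    exact_mod_cast hk2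
  -- the complex L-series of moebius at s equals zeta⁻¹
  have h1 : riemannZeta s * LSeries (fun n => ((moebius n : ℤ) : ℂ)) s = 1 := by
    have h := ArithmeticFunction.LSeries_zeta_mul_Lseries_moebius (s := s) hs
    rwa [ArithmeticFunction.LSeries_zeta_eq_riemannZeta hs] at h
  have h2 : LSeries (fun n => ((moebius n : ℤ) : ℂ)) s = (riemannZeta s)⁻¹ :=
    (inv_eq_of_mul_eq_one_right h1).symm
  -- the real tsum corresponds to the complex L-series
  have h3 : ((∑' d : ℕ, (moebius d : ℝ) * ((d:ℝ)^k)⁻¹ : ℝ) : ℂ)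
      = LSeries (fun n => ((moebius n : ℤ) : ℂ)) s := by
    rw [Complex.ofReal_tsum]
    refine tsum_congr fun d => ?_
    rcases eq_or_ne d 0 with rfl | hd
    · simp [LSeries.term]
    · rw [LSeries.term_of_ne_zero hd, hs_def, Complex.cpow_natCast, div_eq_mul_inv]
      push_cast
      ring
  -- value of zeta
  have hm0 : m ≠ 0 := by omega
  have h4 := riemannZeta_two_mul_nat hm0
  set V : ℝ := (-1 : ℝ) ^ (m + 1) * 2 ^ (2*m - 1) * Real.pi ^ (2*m)
      * (bernoulli (2*m) : ℝ) / (Nat.factorial (2*m) : ℝ) with hV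
  have h5 : riemannZeta s = (V : ℂ) := by
    rw [hs_def, hk]
    have : ((2 * m : ℕ) : ℂ) = 2 * (m : ℂ) := by push_cast; ring
    rw [this, h4, hV]
    push_cast
    ring
  have h6 : ((∑' d : ℕ, (moebius d : ℝ) * ((d:ℝ)^k)⁻¹ : ℝ) : ℂ) = ((V⁻¹ : ℝ) : ℂ) := by
    rw [h3, h2, h5, Complex.ofReal_inv]
  have h7 : ∑' d : ℕ, (moebius d : ℝ) * ((d:ℝ)^k)⁻¹ = V⁻¹ :=
    Complex.ofReal_injective h6
  rw [h7, hV, hk]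
  obtain ⟨n, hn⟩ : ∃ n, 2 * m = n + 1 := ⟨2 * m - 1, by omega⟩
  have hn' : 2 * m - 1 = n := by omega
  rw [hn', hn]
  have hfact : ((Nat.factorial (n+1) : ℝ)) ≠ 0 := by positivity
  have hpi : Real.pi ≠ 0 := Real.pi_ne_zero
  rcases eq_or_ne ((bernoulli (n+1) : ℝ)) 0 with hB | hB
  · rw [hB]
    simp
  · rcases Nat.even_or_odd (m+1) with hpar | hpar
    · rw [hpar.neg_one_pow]
      rw [one_mul]
      field_simp
      ring
    · rw [hpar.neg_one_pow]
      field_simp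
      ring

end Aux

theorem coprimeCode_density_even (m : ℕ) (hm : 1 ≤ m) :
    Tendsto
      (fun N : ℕ => ((CoprimeCode N (2 * m)).card : ℝ) / (N.choose (2 * m) : ℝ))
      atTop
      (nhds ((-1 : ℝ) ^ (m + 1) * 2 * (Nat.factorial (2 * m) : ℝ) /
        ((2 * Real.pi) ^ (2 * m) * (bernoulli (2 * m) : ℝ)))) := by
  have h := tendsto_density (2 * m) (by omega)
  rwa [tsum_moebius_value m hm] at h
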